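/- Let K = [[k_nn, k_nt],[k_nt, k_tt]] be symmetric positive definite with k_nt ≥ 0, f ≥ 0 a friction coefficient with f·k_nt/k_tt < 1, F ∈ ℝ², w_t ∈ ℝ. For σ ≥ 0, let u(σ) be the minimizer over {v : v_n ≤ 0} of v ↦ (1/2)⟨v,Kv⟩ − ⟨F,v⟩ + σ|v_t − w_t|, let t(σ) = K u(σ) − F, and set P(σ) = −f·t(σ)_n. Then P is a strict contraction on [0,∞): |P(σ₁) − P(σ₂)| ≤ (f·k_nt/k_tt)|σ₁ − σ₂|, and hence the discrete incremental friction problem has a unique solution. -/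

import Mathlib

set_option maxHeartbeats 2000000

lemma quadPos (knn knt ktt : ℝ) (hktt : 0 < ktt) (hdet : 0 < knn * ktt - knt ^ 2)
    (d1 d2 : ℝ) : 0 ≤ knn * d1 ^ 2 + 2 * knt * d1 * d2 + ktt * d2 ^ 2 := by
  nlinarith [sq_nonneg (knt * d1 + ktt * d2), sq_nonneg d1]

-- core algebraic contraction estimate
lemma core (knn knt ktt δ p q d1 d2 : ℝ) (hknt : 0 ≤ knt) (hktt : 0 < ktt)
    (hdet : 0 < knn * ktt - knt ^ 2) (hδ : 0 ≤ δ)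
    (hp : p = knn * d1 + knt * d2) (hq : q = knt * d1 + ktt * d2)
    (F1 : d1 * p ≤ 0) (F2 : q * d2 ≤ δ * |d2|) :
    |p| ≤ knt / ktt * δ := by
  have hknn : 0 < knn := by nlinarith [sq_nonneg knt]
  have hA : ktt * p ^ 2 ≤ knt * (p * q) := by
    have h1 : (knn * ktt - knt ^ 2) * (d1 * p) ≤ 0 :=
      mul_nonpos_of_nonneg_of_nonpos hdet.le F1
    have h4 : (knn * ktt - knt ^ 2) * (d1 * p) = ktt * p ^ 2 - knt * (p * q) := by
      rw [hp, hq]; ring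
    linarith [h1, h4.symm.le, h4.le]
  have hB : q * (knn * q - knt * p) ≤ δ * |knn * q - knt * p| := by
    have h2 : (knn * ktt - knt ^ 2) * d2 = knn * q - knt * p := by
      rw [hp, hq]; ring
    have h3 : |knn * q - knt * p| = (knn * ktt - knt ^ 2) * |d2| := by
      rw [← h2, abs_mul, abs_of_pos hdet]
    have h4 : q * (knn * q - knt * p) = (knn * ktt - knt ^ 2) * (q * d2) := by
      rw [hp, hq]; ring
    have h5 : (knn * ktt - knt ^ 2) * (q * d2) ≤ (knn * ktt - knt ^ 2) * (δ * |d2|) :=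
      mul_le_mul_of_nonneg_left F2 hdet.le
    rw [h3, h4]
    calc (knn * ktt - knt ^ 2) * (q * d2) ≤ (knn * ktt - knt ^ 2) * (δ * |d2|) := h5
      _ = δ * ((knn * ktt - knt ^ 2) * |d2|) := by ring
  by_cases hp0 : p = 0
  · rw [hp0, abs_zero]; positivity
  · have hpq : 0 ≤ p * q := by
      by_contra hneg
      push_neg at hneg
      have hkp : ktt * p ^ 2 ≤ 0 := le_trans hA (mul_nonpos_of_nonneg_of_nonpos hknt hneg.le)
      have hps : p ^ 2 ≤ 0 := by
        by_contra hh
        push_neg at hh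
        nlinarith [mul_pos hktt hh]
      exact hp0 (pow_eq_zero_iff two_ne_zero |>.mp (le_antisymm hps (sq_nonneg p)))
    have hp2 : 0 < p ^ 2 := by positivity
    have hkntpos : 0 < knt := by
      rcases eq_or_lt_of_le hknt with h | h
      · exfalso; nlinarith [hA]
      · exact h
    have hpqpos : 0 < p * q := by
      rcases eq_or_lt_of_le hpq with h | h
      · exfalso; nlinarith [hA]
      · exact h
    have hq0 : q ≠ 0 := by
      intro h; rw [h, mul_zero] at hpqpos; exact lt_irrefl _ hpqpos
    have habsmul : |p| * |q| = p * q := by rw [← abs_mul, abs_of_nonneg hpq]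
    have hA' : ktt * |p| ≤ knt * |q| := by
      have h1 : ktt * (|p| * |p|) ≤ knt * (|p| * |q|) := by
        rw [habsmul]; nlinarith [hA, sq_abs p]
      have hpabs : 0 < |p| := abs_pos.mpr hp0
      nlinarith [h1]
    have hqabs : 0 < |q| := abs_pos.mpr hq0
    have hM : knt * |p| < knn * |q| := by nlinarith [hA']
    have hsign : |knn * q - knt * p| = knn * |q| - knt * |p| := by
      rcases lt_trichotomy q 0 with hq' | hq' | hq'
      · have hp' : p < 0 := by nlinarith [hpqpos]
        rw [abs_of_neg hq', abs_of_neg hp'] at hM ⊢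
        rw [abs_of_neg (by linarith : knn * q - knt * p < 0)]; ring
      · exact absurd hq' hq0
      · have hp' : 0 < p := by nlinarith [hpqpos]
        rw [abs_of_pos hq', abs_of_pos hp'] at hM ⊢
        rw [abs_of_pos (by linarith : 0 < knn * q - knt * p)]
    have hqδ : |q| ≤ δ := by
      rw [hsign] at hB
      have hlhs : q * (knn * q - knt * p) = |q| * (knn * |q| - knt * |p|) := by
        rcases lt_trichotomy q 0 with hq' | hq' | hq'
        · have hp' : p < 0 := by nlinarith [hpqpos]
          rw [abs_of_neg hq', abs_of_neg hp']; ring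
        · exact absurd hq' hq0
        · have hp' : 0 < p := by nlinarith [hpqpos]
          rw [abs_of_pos hq', abs_of_pos hp']
      rw [hlhs] at hB
      nlinarith [hB, hM]
    rw [div_mul_eq_mul_div, le_div_iff₀ hktt]
    nlinarith [hA', hqδ, hkntpos]

lemma keyconds (knn knt ktt Fn Ft wt σ : ℝ) (hknn : 0 < knn) (hktt : 0 < ktt)
    (hσ : 0 ≤ σ) (a b : ℝ) (ha : a ≤ 0)
    (hmin : ∀ v : ℝ × ℝ, v.1 ≤ 0 →
      (1/2) * (knn * a ^ 2 + 2 * knt * a * b + ktt * b ^ 2)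
        - (Fn * a + Ft * b) + σ * |b - wt|
      ≤ (1/2) * (knn * v.1 ^ 2 + 2 * knt * v.1 * v.2 + ktt * v.2 ^ 2)
        - (Fn * v.1 + Ft * v.2) + σ * |v.2 - wt|) :
    knn * a + knt * b - Fn ≤ 0 ∧ a * (knn * a + knt * b - Fn) = 0 ∧
    |knt * a + ktt * b - Ft| ≤ σ ∧
    (knt * a + ktt * b - Ft) * (b - wt) = -σ * |b - wt| := by
  set tn := knn * a + knt * b - Fn with htn
  set tt := knt * a + ktt * b - Ft with htt
  have L1 : tn ≤ 0 := by
    by_contra h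
    push_neg at h
    set ε := tn / knn with hε
    have hεpos : 0 < ε := div_pos h hknn
    have hmm := hmin (a - ε, b) (show a - ε ≤ 0 by linarith)
    simp only at hmm
    have hk : knn * ε = tn := by rw [hε]; field_simp [hknn.ne']
    have hk2 : knn * ε ^ 2 = tn * ε := by rw [sq, ← mul_assoc, hk]
    have hid : (1/2) * (knn * (a - ε) ^ 2 + 2 * knt * (a - ε) * b + ktt * b ^ 2)
        - (Fn * (a - ε) + Ft * b)
        = (1/2) * (knn * a ^ 2 + 2 * knt * a * b + ktt * b ^ 2)
          - (Fn * a + Ft * b) - ε * tn + knn * ε ^ 2 / 2 := by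
      rw [htn]; ring
    nlinarith [mul_pos hεpos h]
  have L2 : a * tn = 0 := by
    rcases eq_or_lt_of_le ha with h0 | h0
    · rw [h0, zero_mul]
    · rcases eq_or_lt_of_le L1 with h1 | h1
      · rw [h1, mul_zero]
      · exfalso
        set ε := min (-a) (-tn / knn) with hεdef
        have hε1 : ε ≤ -a := min_le_left _ _
        have hε2 : ε ≤ -tn / knn := min_le_right _ _
        have hεpos : 0 < ε := lt_min (by linarith) (div_pos (by linarith) hknn)
        have hmm := hmin (a + ε, b) (show a + ε ≤ 0 by linarith)
        simp only at hmm
        have h3 : ε * knn ≤ -tn := (le_div_iff₀ hknn).mp hε2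
        have hid : (1/2) * (knn * (a + ε) ^ 2 + 2 * knt * (a + ε) * b + ktt * b ^ 2)
            - (Fn * (a + ε) + Ft * b)
            = (1/2) * (knn * a ^ 2 + 2 * knt * a * b + ktt * b ^ 2)
              - (Fn * a + Ft * b) + ε * tn + knn * ε ^ 2 / 2 := by
          rw [htn]; ring
        nlinarith [mul_pos hεpos (neg_pos.mpr h1), mul_le_mul_of_nonneg_left h3 hεpos.le]
  have L3 : |tt| ≤ σ := by
    rw [abs_le]
    constructor
    · by_contra h
      push_neg at h
      set ε := (-σ - tt) / ktt with hε
      have hεpos : 0 < ε := div_pos (by linarith) hktt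
      have hmm := hmin (a, b + ε) (show a ≤ 0 from ha)
      simp only at hmm
      have habs : |b + ε - wt| ≤ |b - wt| + ε := by
        have h2 : |b + ε - wt| ≤ |b - wt| + |ε| := by
          calc |b + ε - wt| = |(b - wt) + ε| := by ring_nf
            _ ≤ |b - wt| + |ε| := abs_add_le _ _
        rwa [abs_of_pos hεpos] at h2
      have hk : ktt * ε = -σ - tt := by rw [hε]; field_simp [hktt.ne']
      have hk2 : ktt * ε ^ 2 = (-σ - tt) * ε := by rw [sq, ← mul_assoc, hk]
      have hid : (1/2) * (knn * a ^ 2 + 2 * knt * a * (b + ε) + ktt * (b + ε) ^ 2)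
          - (Fn * a + Ft * (b + ε))
          = (1/2) * (knn * a ^ 2 + 2 * knt * a * b + ktt * b ^ 2)
            - (Fn * a + Ft * b) + ε * tt + ktt * ε ^ 2 / 2 := by
        rw [htt]; ring
      nlinarith [mul_le_mul_of_nonneg_left habs hσ,
        mul_pos hεpos (show (0:ℝ) < -σ - tt by linarith)]
    · by_contra h
      push_neg at h
      set ε := (tt - σ) / ktt with hε
      have hεpos : 0 < ε := div_pos (by linarith) hktt
      have hmm := hmin (a, b - ε) (show a ≤ 0 from ha)
      simp only at hmm
      have habs : |b - ε - wt| ≤ |b - wt| + ε := by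
        have h2 : |b - ε - wt| ≤ |b - wt| + |(-ε)| := by
          calc |b - ε - wt| = |(b - wt) + (-ε)| := by ring_nf
            _ ≤ |b - wt| + |(-ε)| := abs_add_le _ _
        rwa [abs_neg, abs_of_pos hεpos] at h2
      have hk : ktt * ε = tt - σ := by rw [hε]; field_simp [hktt.ne']
      have hk2 : ktt * ε ^ 2 = (tt - σ) * ε := by rw [sq, ← mul_assoc, hk]
      have hid : (1/2) * (knn * a ^ 2 + 2 * knt * a * (b - ε) + ktt * (b - ε) ^ 2)
          - (Fn * a + Ft * (b - ε))
          = (1/2) * (knn * a ^ 2 + 2 * knt * a * b + ktt * b ^ 2)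
            - (Fn * a + Ft * b) - ε * tt + ktt * ε ^ 2 / 2 := by
        rw [htt]; ring
      nlinarith [mul_le_mul_of_nonneg_left habs hσ,
        mul_pos hεpos (show (0:ℝ) < tt - σ by linarith)]
  refine ⟨L1, L2, L3, ?_⟩
  obtain ⟨x, hx⟩ : ∃ x, x = b - wt := ⟨_, rfl⟩
  rw [← hx]
  rcases eq_or_ne x 0 with h0 | h0
  · rw [h0]; simp
  · have hge : -σ * |x| ≤ tt * x := by
      have h1 : -|tt * x| ≤ tt * x := neg_abs_le _
      have h2 : |tt * x| = |tt| * |x| := abs_mul _ _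
      nlinarith [abs_nonneg x, L3]
    have hle : tt * x + σ * |x| ≤ 0 := by
      by_contra h
      push_neg at h
      obtain ⟨c, hc⟩ : ∃ c, c = tt * x + σ * |x| := ⟨_, rfl⟩
      rw [← hc] at h
      have hx2 : 0 < x ^ 2 := by positivity
      obtain ⟨s, hs⟩ : ∃ s, s = min 1 (c / (ktt * x ^ 2)) := ⟨_, rfl⟩
      have hspos : 0 < s := hs ▸ lt_min one_pos (div_pos h (by positivity))
      have hs1 : s ≤ 1 := hs ▸ min_le_left _ _
      have hs2 : ktt * x ^ 2 * s ≤ c := by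
        have hmr : s ≤ c / (ktt * x ^ 2) := hs ▸ min_le_right _ _
        calc ktt * x ^ 2 * s ≤ ktt * x ^ 2 * (c / (ktt * x ^ 2)) := by
              apply mul_le_mul_of_nonneg_left hmr (by positivity)
          _ = c := by field_simp
      have hmm := hmin (a, b - s * x) (show a ≤ 0 from ha)
      simp only at hmm
      have habs : |b - s * x - wt| = (1 - s) * |x| := by
        have hb : b - s * x - wt = (1 - s) * x := by rw [hx]; ring
        rw [hb, abs_mul, abs_of_nonneg (by linarith : (0:ℝ) ≤ 1 - s)]
      rw [habs, ← hx] at hmm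
      have hid : (1/2) * (knn * a ^ 2 + 2 * knt * a * (b - s * x) + ktt * (b - s * x) ^ 2)
          - (Fn * a + Ft * (b - s * x)) + σ * ((1 - s) * |x|)
          = ((1/2) * (knn * a ^ 2 + 2 * knt * a * b + ktt * b ^ 2)
            - (Fn * a + Ft * b) + σ * |x|) - s * (tt * x + σ * |x|)
            + ktt * s ^ 2 * x ^ 2 / 2 := by
        rw [htt, hx]; ring
      rw [hid, ← hc] at hmm
      have h5 : ktt * s ^ 2 * x ^ 2 ≤ s * c := by
        calc ktt * s ^ 2 * x ^ 2 = s * (ktt * x ^ 2 * s) := by ring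
          _ ≤ s * c := mul_le_mul_of_nonneg_left hs2 hspos.le
      have h6 : 0 < s * c := mul_pos hspos h
      linarith only [hmm, h5, h6]
    linarith only [hge, hle]

lemma contract (knn knt ktt Fn Ft wt σ₁ σ₂ a₁ b₁ a₂ b₂ : ℝ)
    (hknt : 0 ≤ knt) (hktt : 0 < ktt) (hdet : 0 < knn * ktt - knt ^ 2)
    (ha₁ : a₁ ≤ 0) (ha₂ : a₂ ≤ 0)
    (K₁ : knn * a₁ + knt * b₁ - Fn ≤ 0 ∧ a₁ * (knn * a₁ + knt * b₁ - Fn) = 0 ∧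
      |knt * a₁ + ktt * b₁ - Ft| ≤ σ₁ ∧
      (knt * a₁ + ktt * b₁ - Ft) * (b₁ - wt) = -σ₁ * |b₁ - wt|)
    (K₂ : knn * a₂ + knt * b₂ - Fn ≤ 0 ∧ a₂ * (knn * a₂ + knt * b₂ - Fn) = 0 ∧
      |knt * a₂ + ktt * b₂ - Ft| ≤ σ₂ ∧
      (knt * a₂ + ktt * b₂ - Ft) * (b₂ - wt) = -σ₂ * |b₂ - wt|) :
    |(knn * a₁ + knt * b₁ - Fn) - (knn * a₂ + knt * b₂ - Fn)| ≤
      knt / ktt * |σ₁ - σ₂| := by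
  obtain ⟨L11, L12, L13, L14⟩ := K₁
  obtain ⟨L21, L22, L23, L24⟩ := K₂
  set tn₁ := knn * a₁ + knt * b₁ - Fn with htn₁
  set tn₂ := knn * a₂ + knt * b₂ - Fn with htn₂
  set tt₁ := knt * a₁ + ktt * b₁ - Ft with htt₁
  set tt₂ := knt * a₂ + ktt * b₂ - Ft with htt₂
  have F1 : (a₁ - a₂) * (tn₁ - tn₂) ≤ 0 := by
    have h1 : 0 ≤ a₁ * tn₂ := by nlinarith [mul_nonneg (neg_nonneg.mpr ha₁) (neg_nonneg.mpr L21)]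
    have h2 : 0 ≤ a₂ * tn₁ := by nlinarith [mul_nonneg (neg_nonneg.mpr ha₂) (neg_nonneg.mpr L11)]
    nlinarith [L12, L22]
  have F2 : (tt₁ - tt₂) * (b₁ - b₂) ≤ |σ₁ - σ₂| * |b₁ - b₂| := by
    have e1 : -(tt₁ * (b₂ - wt)) ≤ σ₁ * |b₂ - wt| := by
      calc -(tt₁ * (b₂ - wt)) ≤ |tt₁ * (b₂ - wt)| := neg_le_abs _
        _ = |tt₁| * |b₂ - wt| := abs_mul _ _
        _ ≤ σ₁ * |b₂ - wt| := mul_le_mul_of_nonneg_right L13 (abs_nonneg _)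
    have e2 : -(tt₂ * (b₁ - wt)) ≤ σ₂ * |b₁ - wt| := by
      calc -(tt₂ * (b₁ - wt)) ≤ |tt₂ * (b₁ - wt)| := neg_le_abs _
        _ = |tt₂| * |b₁ - wt| := abs_mul _ _
        _ ≤ σ₂ * |b₁ - wt| := mul_le_mul_of_nonneg_right L23 (abs_nonneg _)
    have hqd : (tt₁ - tt₂) * (b₁ - b₂) =
        tt₁ * (b₁ - wt) + tt₂ * (b₂ - wt) - tt₁ * (b₂ - wt) - tt₂ * (b₁ - wt) := by
      ring
    have h3 : (tt₁ - tt₂) * (b₁ - b₂) ≤ (σ₂ - σ₁) * (|b₁ - wt| - |b₂ - wt|) := by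
      rw [hqd, L14, L24]; nlinarith [e1, e2]
    have h5 : |(|b₁ - wt| - |b₂ - wt|)| ≤ |b₁ - b₂| := by
      have := abs_abs_sub_abs_le_abs_sub (b₁ - wt) (b₂ - wt)
      simpa using this
    calc (tt₁ - tt₂) * (b₁ - b₂) ≤ (σ₂ - σ₁) * (|b₁ - wt| - |b₂ - wt|) := h3
      _ ≤ |(σ₂ - σ₁) * (|b₁ - wt| - |b₂ - wt|)| := le_abs_self _
      _ = |σ₂ - σ₁| * |(|b₁ - wt| - |b₂ - wt|)| := abs_mul _ _
      _ ≤ |σ₂ - σ₁| * |b₁ - b₂| := mul_le_mul_of_nonneg_left h5 (abs_nonneg _)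
      _ = |σ₁ - σ₂| * |b₁ - b₂| := by rw [abs_sub_comm]
  exact core knn knt ktt |σ₁ - σ₂| (tn₁ - tn₂) (tt₁ - tt₂) (a₁ - a₂) (b₁ - b₂)
    hknt hktt hdet (abs_nonneg _) (by rw [htn₁, htn₂]; ring) (by rw [htt₁, htt₂]; ring)
    F1 F2

/-- Solution of the discrete incremental friction problem with stiffness
`K = [[knn, knt],[knt, ktt]]`, friction coefficient `f`, force `F` and
previous tangential displacement `wt`. -/
def IncSol (knn knt ktt f wt : ℝ) (F u t : ℝ × ℝ) : Prop :=
  knn * u.1 + knt * u.2 = F.1 + t.1 ∧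
  knt * u.1 + ktt * u.2 = F.2 + t.2 ∧
  u.1 ≤ 0 ∧ t.1 ≤ 0 ∧ u.1 * t.1 = 0 ∧
  |t.2| ≤ -f * t.1 ∧ t.2 * (u.2 - wt) = f * t.1 * |u.2 - wt|

/-- under `f·k_nt/k_tt < 1`, the map `P(σ) = −f t(σ)_n` is a
strict contraction with constant `f·k_nt/k_tt`, and the discrete incremental
problem has a unique solution. -/
theorem stmt2 (knn knt ktt f Fn Ft wt : ℝ)
    (hknt : 0 ≤ knt) (hknn : 0 < knn) (hktt : 0 < ktt)
    (hdet : 0 < knn * ktt - knt ^ 2) (hf : 0 ≤ f) (hsmall : f * knt / ktt < 1)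
    (u : ℝ → ℝ × ℝ) (t : ℝ → ℝ × ℝ) (P : ℝ → ℝ)
    (hu : ∀ σ : ℝ, 0 ≤ σ → (u σ).1 ≤ 0 ∧ ∀ v : ℝ × ℝ, v.1 ≤ 0 →
      (1/2) * (knn * (u σ).1 ^ 2 + 2 * knt * (u σ).1 * (u σ).2 + ktt * (u σ).2 ^ 2)
        - (Fn * (u σ).1 + Ft * (u σ).2) + σ * |(u σ).2 - wt|
      ≤ (1/2) * (knn * v.1 ^ 2 + 2 * knt * v.1 * v.2 + ktt * v.2 ^ 2)
        - (Fn * v.1 + Ft * v.2) + σ * |v.2 - wt|)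
    (ht : ∀ σ : ℝ, t σ = (knn * (u σ).1 + knt * (u σ).2 - Fn,
                          knt * (u σ).1 + ktt * (u σ).2 - Ft))
    (hP : ∀ σ : ℝ, P σ = -f * (t σ).1) :
    (∀ σ₁ σ₂ : ℝ, 0 ≤ σ₁ → 0 ≤ σ₂ →
      |P σ₁ - P σ₂| ≤ (f * knt / ktt) * |σ₁ - σ₂|) ∧
    ∃! p : (ℝ × ℝ) × (ℝ × ℝ), IncSol knn knt ktt f wt (Fn, Ft) p.1 p.2 := by
  have hK : ∀ σ : ℝ, 0 ≤ σ →
      knn * (u σ).1 + knt * (u σ).2 - Fn ≤ 0 ∧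
      (u σ).1 * (knn * (u σ).1 + knt * (u σ).2 - Fn) = 0 ∧
      |knt * (u σ).1 + ktt * (u σ).2 - Ft| ≤ σ ∧
      (knt * (u σ).1 + ktt * (u σ).2 - Ft) * ((u σ).2 - wt) = -σ * |(u σ).2 - wt| :=
    fun σ hσ => keyconds knn knt ktt Fn Ft wt σ hknn hktt hσ _ _ (hu σ hσ).1 (hu σ hσ).2
  have part1 : ∀ σ₁ σ₂ : ℝ, 0 ≤ σ₁ → 0 ≤ σ₂ →
      |P σ₁ - P σ₂| ≤ (f * knt / ktt) * |σ₁ - σ₂| := by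
    intro σ₁ σ₂ h1 h2
    have hc := contract knn knt ktt Fn Ft wt σ₁ σ₂ (u σ₁).1 (u σ₁).2 (u σ₂).1 (u σ₂).2
      hknt hktt hdet (hu σ₁ h1).1 (hu σ₂ h2).1 (hK σ₁ h1) (hK σ₂ h2)
    rw [hP σ₁, hP σ₂, ht σ₁, ht σ₂]
    dsimp only
    calc |(-f * (knn * (u σ₁).1 + knt * (u σ₁).2 - Fn))
          - (-f * (knn * (u σ₂).1 + knt * (u σ₂).2 - Fn))|
        = f * |(knn * (u σ₁).1 + knt * (u σ₁).2 - Fn)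
            - (knn * (u σ₂).1 + knt * (u σ₂).2 - Fn)| := by
          rw [show (-f * (knn * (u σ₁).1 + knt * (u σ₁).2 - Fn))
            - (-f * (knn * (u σ₂).1 + knt * (u σ₂).2 - Fn))
            = -(f * ((knn * (u σ₁).1 + knt * (u σ₁).2 - Fn)
              - (knn * (u σ₂).1 + knt * (u σ₂).2 - Fn))) by ring,
            abs_neg, abs_mul, abs_of_nonneg hf]
      _ ≤ f * (knt / ktt * |σ₁ - σ₂|) := mul_le_mul_of_nonneg_left hc hf
      _ = f * knt / ktt * |σ₁ - σ₂| := by ring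
  refine ⟨part1, ?_⟩
  have hPnn : ∀ σ : ℝ, 0 ≤ σ → 0 ≤ P σ := by
    intro σ hσ
    rw [hP σ, ht σ]
    dsimp only
    nlinarith [mul_nonneg hf (neg_nonneg.mpr (hK σ hσ).1)]
  -- Banach fixed point for σ ↦ P (max σ 0)
  have hq0 : (0:ℝ) ≤ f * knt / ktt := by positivity
  have hlip : LipschitzWith (Real.toNNReal (f * knt / ktt)) (fun σ => P (max σ 0)) := by
    apply LipschitzWith.of_dist_le_mul
    intro x y
    rw [Real.coe_toNNReal _ hq0, Real.dist_eq, Real.dist_eq]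
    calc |P (max x 0) - P (max y 0)|
        ≤ f * knt / ktt * |max x 0 - max y 0| :=
          part1 _ _ (le_max_right _ _) (le_max_right _ _)
      _ ≤ f * knt / ktt * |x - y| :=
          mul_le_mul_of_nonneg_left (abs_max_sub_max_le_abs _ _ _) hq0
  have hcw : ContractingWith (Real.toNNReal (f * knt / ktt)) (fun σ => P (max σ 0)) := by
    refine ⟨?_, hlip⟩
    have h1 : (Real.toNNReal (f * knt / ktt) : ℝ) < 1 := by
      rwa [Real.coe_toNNReal _ hq0]
    exact_mod_cast h1
  obtain ⟨y, hy, -⟩ := hcw.exists_fixedPoint 0 (edist_ne_top _ _)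
  have hy' : P (max y 0) = y := hy
  have hynn : 0 ≤ y := hy' ▸ hPnn (max y 0) (le_max_right _ _)
  have hfixy : P y = y := by rwa [max_eq_left hynn] at hy'
  have hyval : y = -f * (knn * (u y).1 + knt * (u y).2 - Fn) := by
    conv_lhs => rw [← hfixy]
    rw [hP y, ht y]
  obtain ⟨Ky1, Ky2, Ky3, Ky4⟩ := hK y hynn
  refine ⟨(u y, t y), ?_, ?_⟩
  · -- existence
    rw [ht y]
    refine ⟨by dsimp only; ring, by dsimp only; ring, (hu y hynn).1, Ky1, Ky2, ?_, ?_⟩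
    · dsimp only
      calc |knt * (u y).1 + ktt * (u y).2 - Ft| ≤ y := Ky3
        _ = -f * (knn * (u y).1 + knt * (u y).2 - Fn) := hyval
    · dsimp only
      have hy2 : -y = f * (knn * (u y).1 + knt * (u y).2 - Fn) := by linarith [hyval]
      rw [Ky4, hy2]
  · -- uniqueness
    rintro ⟨⟨u1, u2⟩, t1, t2⟩ ⟨e1, e2, hu1, ht1, hut, htt2, httx⟩
    dsimp only at e1 e2 hu1 ht1 hut htt2 httx ⊢
    have hσ' : 0 ≤ -f * t1 := by
      nlinarith [mul_nonneg hf (neg_nonneg.mpr ht1)]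
    have ht1e : t1 = knn * u1 + knt * u2 - Fn := by linarith
    have ht2e : t2 = knt * u1 + ktt * u2 - Ft := by linarith
    -- (u1, u2) minimizes the σ' = -f*t1 functional
    have hmin' : ∀ v : ℝ × ℝ, v.1 ≤ 0 →
        (1/2) * (knn * u1 ^ 2 + 2 * knt * u1 * u2 + ktt * u2 ^ 2)
          - (Fn * u1 + Ft * u2) + (-f * t1) * |u2 - wt|
        ≤ (1/2) * (knn * v.1 ^ 2 + 2 * knt * v.1 * v.2 + ktt * v.2 ^ 2)
          - (Fn * v.1 + Ft * v.2) + (-f * t1) * |v.2 - wt| := by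
      intro v hv
      have hA : 0 ≤ t1 * v.1 := by
        nlinarith [mul_nonneg (neg_nonneg.mpr ht1) (neg_nonneg.mpr hv)]
      have hD : -((-f * t1) * |v.2 - wt|) ≤ t2 * (v.2 - wt) := by
        have h1 : -(t2 * (v.2 - wt)) ≤ |t2| * |v.2 - wt| := by
          calc -(t2 * (v.2 - wt)) ≤ |t2 * (v.2 - wt)| := neg_le_abs _
            _ = |t2| * |v.2 - wt| := abs_mul _ _
        nlinarith [mul_le_mul_of_nonneg_right htt2 (abs_nonneg (v.2 - wt))]
      have hQ : 0 ≤ knn * (v.1 - u1) ^ 2 + 2 * knt * (v.1 - u1) * (v.2 - u2)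
          + ktt * (v.2 - u2) ^ 2 := quadPos knn knt ktt hktt hdet _ _
      have hC0 : t2 * (u2 - wt) + (-f * t1) * |u2 - wt| = 0 := by linarith
      have hid : (1/2) * (knn * v.1 ^ 2 + 2 * knt * v.1 * v.2 + ktt * v.2 ^ 2)
            - (Fn * v.1 + Ft * v.2) + (-f * t1) * |v.2 - wt|
          - ((1/2) * (knn * u1 ^ 2 + 2 * knt * u1 * u2 + ktt * u2 ^ 2)
            - (Fn * u1 + Ft * u2) + (-f * t1) * |u2 - wt|)
          = t1 * v.1 - u1 * t1 + (t2 * (v.2 - wt) + (-f * t1) * |v.2 - wt|)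
            - (t2 * (u2 - wt) + (-f * t1) * |u2 - wt|)
            + (1/2) * (knn * (v.1 - u1) ^ 2 + 2 * knt * (v.1 - u1) * (v.2 - u2)
              + ktt * (v.2 - u2) ^ 2) := by
        rw [ht1e, ht2e]; ring
      linarith [hid, hA, hD, hQ, hut, hC0]
    -- u (-f*t1) = (u1, u2) by uniqueness of the minimizer
    obtain ⟨hA1le, hAmin⟩ := hu (-f * t1) hσ'
    have hle1 := hAmin (u1, u2) hu1
    have hle2 := hmin' (u (-f * t1)) hA1le
    dsimp only at hle1
    have hm := hAmin (((u (-f * t1)).1 + u1) / 2, ((u (-f * t1)).2 + u2) / 2)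
      (by dsimp only; linarith)
    dsimp only at hm
    have habs : |((u (-f * t1)).2 + u2) / 2 - wt|
        ≤ (|(u (-f * t1)).2 - wt| + |u2 - wt|) / 2 := by
      calc |((u (-f * t1)).2 + u2) / 2 - wt|
          = |(((u (-f * t1)).2 - wt) + (u2 - wt))| / 2 := by
            rw [show ((u (-f * t1)).2 + u2) / 2 - wt
              = (((u (-f * t1)).2 - wt) + (u2 - wt)) / 2 by ring, abs_div, abs_two]
        _ ≤ (|(u (-f * t1)).2 - wt| + |u2 - wt|) / 2 := by
            have := abs_add_le ((u (-f * t1)).2 - wt) (u2 - wt)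
            linarith
    have hσm := mul_le_mul_of_nonneg_left habs hσ'
    have hqid : (1/2) * (knn * (((u (-f * t1)).1 + u1) / 2) ^ 2
          + 2 * knt * (((u (-f * t1)).1 + u1) / 2) * (((u (-f * t1)).2 + u2) / 2)
          + ktt * (((u (-f * t1)).2 + u2) / 2) ^ 2)
        - (Fn * (((u (-f * t1)).1 + u1) / 2) + Ft * (((u (-f * t1)).2 + u2) / 2))
        = (((1/2) * (knn * (u (-f * t1)).1 ^ 2 + 2 * knt * (u (-f * t1)).1 * (u (-f * t1)).2
            + ktt * (u (-f * t1)).2 ^ 2) - (Fn * (u (-f * t1)).1 + Ft * (u (-f * t1)).2))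
          + ((1/2) * (knn * u1 ^ 2 + 2 * knt * u1 * u2 + ktt * u2 ^ 2)
            - (Fn * u1 + Ft * u2))) / 2
          - (1/8) * (knn * ((u (-f * t1)).1 - u1) ^ 2
            + 2 * knt * ((u (-f * t1)).1 - u1) * ((u (-f * t1)).2 - u2)
            + ktt * ((u (-f * t1)).2 - u2) ^ 2) := by ring
    have hQle : knn * ((u (-f * t1)).1 - u1) ^ 2
        + 2 * knt * ((u (-f * t1)).1 - u1) * ((u (-f * t1)).2 - u2)
        + ktt * ((u (-f * t1)).2 - u2) ^ 2 ≤ 0 := by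
      linarith [hm, hσm, hqid, hle1, hle2]
    have hd1 : (u (-f * t1)).1 = u1 := by
      have h1 : (knn * ktt - knt ^ 2) * ((u (-f * t1)).1 - u1) ^ 2 ≤ 0 := by
        nlinarith [sq_nonneg (knt * ((u (-f * t1)).1 - u1) + ktt * ((u (-f * t1)).2 - u2)),
          mul_le_mul_of_nonneg_left hQle hktt.le]
      have h2 : ((u (-f * t1)).1 - u1) ^ 2 ≤ 0 := by
        by_contra hh
        push_neg at hh
        nlinarith [mul_pos hdet hh]
      have := le_antisymm h2 (sq_nonneg _)
      have := pow_eq_zero_iff two_ne_zero |>.mp this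
      linarith
    have hd2 : (u (-f * t1)).2 = u2 := by
      rw [hd1] at hQle
      have h2 : ((u (-f * t1)).2 - u2) ^ 2 ≤ 0 := by
        by_contra hh
        push_neg at hh
        nlinarith [mul_pos hktt hh]
      have := le_antisymm h2 (sq_nonneg _)
      have := pow_eq_zero_iff two_ne_zero |>.mp this
      linarith
    have huσ' : u (-f * t1) = (u1, u2) := Prod.ext hd1 hd2
    have hts : t (-f * t1) = (t1, t2) := by
      rw [ht (-f * t1), huσ']
      dsimp only
      exact Prod.ext (by dsimp only; linarith) (by dsimp only; linarith)
    have hPσ' : P (-f * t1) = -f * t1 := by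
      rw [hP (-f * t1), hts]
    have hσy : -f * t1 = y := by
      have h := part1 (-f * t1) y hσ' hynn
      rw [hPσ', hfixy] at h
      have habs0 : |(-f * t1) - y| = 0 := by
        refine le_antisymm ?_ (abs_nonneg _)
        by_contra hh
        push_neg at hh
        nlinarith [mul_lt_mul_of_pos_right hsmall hh]
      have := abs_eq_zero.mp habs0
      linarith
    rw [← hσy, huσ', hts]
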